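/- Consider the generalized monotone-rate ORFM. Let (x(t), z(t)) be any solution whose trajectory remains in the state space (all x^{pi}_j ∈ [0,1], z_p ≥ 0, z_E ≥ 0), and define V(x,z) = Σ_{p,i,j} |dx^{pi}_j/dt| + Σ_p |dz_p/dt| + |dz_E/dt|, the time derivatives being the components of the vector field evaluated at (x,z). Then t ↦ V(x(t), z(t)) is non-increasing along the solution. -/

import Mathlib

/-- State of the generalized ORFM: codon occupancies `x p i j` (species `p`,
strand `i`, codon `j`, 1-based), pool occupancies `z p`, and the
empty-ribosome pool `zE`. -/
structure GState where
  x : ℕ → ℕ → ℕ → ℝ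
  z : ℕ → ℝ
  zE : ℝ

/-- The generalized monotone-rate ORFM: `M ≥ 1` species, each with `s` strands
of common length `n ≥ 1`; the rates `R0 p i` (initiation, arguments
`(w^{pi}_1, z_p)`), `Rel p i j` for `1 ≤ j ≤ n-1` (elongation, arguments
`(w^{pi}_{j+1}, x^{pi}_j)`), `Rn p i` (termination, argument `x^{pi}_n`),
and `Rp p`, `Rm p` (pool binding/unbinding) are continuously differentiable,
nonnegative, nondecreasing functions of each argument on the physical domain. -/
structure GORFM where
  M : ℕ
  s : ℕ
  n : ℕ
  R0 : ℕ → ℕ → ℝ → ℝ → ℝ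
  Rel : ℕ → ℕ → ℕ → ℝ → ℝ → ℝ
  Rn : ℕ → ℕ → ℝ → ℝ
  Rp : ℕ → ℝ → ℝ
  Rm : ℕ → ℝ → ℝ
  hM : 0 < M
  hn : 0 < n
  hR0_smooth : ∀ p < M, ∀ i < s,
    ContDiffOn ℝ 1 (Function.uncurry (R0 p i)) (Set.Icc 0 1 ×ˢ Set.Ici 0)
  hR0_nonneg : ∀ p < M, ∀ i < s, ∀ a ∈ Set.Icc (0:ℝ) 1, ∀ b ∈ Set.Ici (0:ℝ),
    0 ≤ R0 p i a b
  hR0_mono1 : ∀ p < M, ∀ i < s, ∀ b ∈ Set.Ici (0:ℝ),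
    MonotoneOn (fun a => R0 p i a b) (Set.Icc 0 1)
  hR0_mono2 : ∀ p < M, ∀ i < s, ∀ a ∈ Set.Icc (0:ℝ) 1,
    MonotoneOn (R0 p i a) (Set.Ici 0)
  hRel_smooth : ∀ p < M, ∀ i < s, ∀ j, 1 ≤ j → j ≤ n - 1 →
    ContDiffOn ℝ 1 (Function.uncurry (Rel p i j)) (Set.Icc 0 1 ×ˢ Set.Icc 0 1)
  hRel_nonneg : ∀ p < M, ∀ i < s, ∀ j, 1 ≤ j → j ≤ n - 1 →
    ∀ a ∈ Set.Icc (0:ℝ) 1, ∀ b ∈ Set.Icc (0:ℝ) 1, 0 ≤ Rel p i j a b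
  hRel_mono1 : ∀ p < M, ∀ i < s, ∀ j, 1 ≤ j → j ≤ n - 1 →
    ∀ b ∈ Set.Icc (0:ℝ) 1, MonotoneOn (fun a => Rel p i j a b) (Set.Icc 0 1)
  hRel_mono2 : ∀ p < M, ∀ i < s, ∀ j, 1 ≤ j → j ≤ n - 1 →
    ∀ a ∈ Set.Icc (0:ℝ) 1, MonotoneOn (Rel p i j a) (Set.Icc 0 1)
  hRn_smooth : ∀ p < M, ∀ i < s, ContDiffOn ℝ 1 (Rn p i) (Set.Icc 0 1)
  hRn_nonneg : ∀ p < M, ∀ i < s, ∀ a ∈ Set.Icc (0:ℝ) 1, 0 ≤ Rn p i a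
  hRn_mono : ∀ p < M, ∀ i < s, MonotoneOn (Rn p i) (Set.Icc 0 1)
  hRp_smooth : ∀ p < M, ContDiffOn ℝ 1 (Rp p) (Set.Ici 0)
  hRp_nonneg : ∀ p < M, ∀ a ∈ Set.Ici (0:ℝ), 0 ≤ Rp p a
  hRp_mono : ∀ p < M, MonotoneOn (Rp p) (Set.Ici 0)
  hRm_smooth : ∀ p < M, ContDiffOn ℝ 1 (Rm p) (Set.Ici 0)
  hRm_nonneg : ∀ p < M, ∀ a ∈ Set.Ici (0:ℝ), 0 ≤ Rm p a
  hRm_mono : ∀ p < M, MonotoneOn (Rm p) (Set.Ici 0)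

/-- Ribosomal flux from codon `k` to `k+1` on strand `(p,i)` (`k = 0`:
initiation, `k = n`: termination); vacancies are `w^{pi}_j = 1 - x^{pi}_j`. -/
noncomputable def GORFM.flow (S : GORFM) (st : GState) (p i k : ℕ) : ℝ :=
  if k = 0 then S.R0 p i (1 - st.x p i 1) (st.z p)
  else if k = S.n then S.Rn p i (st.x p i S.n)
  else S.Rel p i k (1 - st.x p i (k + 1)) (st.x p i k)

/-- Codon component `dx^{pi}_j/dt` of the generalized ORFM vector field. -/
noncomputable def GORFM.fx (S : GORFM) (st : GState) (p i j : ℕ) : ℝ :=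
  S.flow st p i (j - 1) - S.flow st p i j

/-- Pool component `dz_p/dt` of the generalized ORFM vector field. -/
noncomputable def GORFM.fz (S : GORFM) (st : GState) (p : ℕ) : ℝ :=
  S.Rp p st.zE - S.Rm p (st.z p)
    + ∑ i ∈ Finset.range S.s, (S.flow st p i S.n - S.flow st p i 0)

/-- Empty-pool component `dz_E/dt` of the generalized ORFM vector field. -/
noncomputable def GORFM.fzE (S : GORFM) (st : GState) : ℝ :=
  ∑ p ∈ Finset.range S.M, S.Rm p (st.z p) - ∑ p ∈ Finset.range S.M, S.Rp p st.zE

/-- Membership in the state space: codon occupancies in `[0,1]`, pools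
nonnegative. -/
def GORFM.inOmega (S : GORFM) (st : GState) : Prop :=
  (∀ p < S.M, ∀ i < S.s, ∀ j, 1 ≤ j → j ≤ S.n → st.x p i j ∈ Set.Icc (0:ℝ) 1)
    ∧ 0 ≤ st.zE ∧ ∀ p < S.M, 0 ≤ st.z p

/-- A (forward-time) solution of the generalized ORFM. -/
def GORFM.isSolution (S : GORFM) (traj : ℝ → GState) : Prop :=
  (∀ t, 0 ≤ t → ∀ p < S.M, ∀ i < S.s, ∀ j, 1 ≤ j → j ≤ S.n →
      HasDerivAt (fun τ => (traj τ).x p i j) (S.fx (traj t) p i j) t)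
    ∧ (∀ t, 0 ≤ t → ∀ p < S.M,
        HasDerivAt (fun τ => (traj τ).z p) (S.fz (traj t) p) t)
    ∧ ∀ t, 0 ≤ t → HasDerivAt (fun τ => (traj τ).zE) (S.fzE (traj t)) t

/-- The Lyapunov function `V`: the sum of the absolute values of all
components of the generalized ORFM vector field. -/
noncomputable def GORFM.V (S : GORFM) (st : GState) : ℝ :=
  (∑ p ∈ Finset.range S.M, ∑ i ∈ Finset.range S.s,
      ∑ j ∈ Finset.Icc 1 S.n, |S.fx st p i j|)
    + ∑ p ∈ Finset.range S.M, |S.fz st p| + |S.fzE st|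

open Set Filter Topology

/-- punctured neighborhood within `Icc 0 1` is nontrivial -/
lemma neBot_punct_Icc {q : ℝ} (hq : q ∈ Icc (0:ℝ) 1) :
    (𝓝[Icc (0:ℝ) 1 \ {q}] q).NeBot := by
  rcases lt_or_eq_of_le hq.2 with h | h
  · have hsub : Ioo q 1 ⊆ Icc (0:ℝ) 1 \ {q} := fun z hz =>
      ⟨⟨le_trans hq.1 (le_of_lt hz.1), le_of_lt hz.2⟩, ne_of_gt hz.1⟩
    have h1 : q ∈ closure (Ioo q 1) := by
      rw [closure_Ioo (ne_of_lt h)]; exact ⟨le_refl q, le_of_lt h⟩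
    exact (mem_closure_iff_nhdsWithin_neBot.1 h1).mono (nhdsWithin_mono q hsub)
  · have hsub : Ioo (0:ℝ) 1 ⊆ Icc (0:ℝ) 1 \ {q} := fun z hz =>
      ⟨⟨le_of_lt hz.1, le_of_lt hz.2⟩, by subst h; simp only [mem_singleton_iff]; exact ne_of_lt hz.2⟩
    have h1 : q ∈ closure (Ioo (0:ℝ) 1) := by
      rw [closure_Ioo one_ne_zero.symm, ← h]; exact ⟨hq.1, le_refl _⟩
    exact (mem_closure_iff_nhdsWithin_neBot.1 h1).mono (nhdsWithin_mono q hsub)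

lemma neBot_punct_Ici {q : ℝ} (hq : q ∈ Ici (0:ℝ)) :
    (𝓝[Ici (0:ℝ) \ {q}] q).NeBot := by
  have hsub : Ioi q ⊆ Ici (0:ℝ) \ {q} := fun z hz =>
    ⟨show (0:ℝ) ≤ z from le_trans hq (le_of_lt hz), ne_of_gt hz⟩
  exact (nhdsGT_neBot q).mono (nhdsWithin_mono q hsub)

/-- a monotone function has nonnegative (within-set) derivative -/
lemma mono_deriv_nonneg {f : ℝ → ℝ} {s : Set ℝ} {q d : ℝ}
    (hm : MonotoneOn f s) (hq : q ∈ s) (hne : (𝓝[s \ {q}] q).NeBot)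
    (hd : HasDerivWithinAt f d s q) : 0 ≤ d := by
  have ht := hasDerivWithinAt_iff_tendsto_slope.1 hd
  refine ge_of_tendsto ht ?_
  filter_upwards [self_mem_nhdsWithin] with z hz
  rcases lt_or_gt_of_ne hz.2 with h | h
  · rw [slope_def_field]
    exact div_nonneg_of_nonpos (by simpa using hm hz.1 hq (le_of_lt h))
      (by simpa using sub_nonpos.2 (le_of_lt h))
  · rw [slope_def_field]
    exact div_nonneg (by simpa using hm hq hz.1 (le_of_lt h))
      (sub_nonneg.2 (le_of_lt h))

/-- one-argument monotone rate composed with a trajectory -/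
lemma comp1_deriv {F : ℝ → ℝ} {s : Set ℝ} (hsU : UniqueDiffOn ℝ s)
    (hF : ContDiffOn ℝ 1 F s) (hm : MonotoneOn F s)
    {u : ℝ → ℝ} {t d : ℝ} (hu : HasDerivAt u d t)
    (hmap : ∀ τ ∈ Ici (0:ℝ), u τ ∈ s) (ht : t ∈ Ici (0:ℝ))
    (hne : (𝓝[s \ {u t}] (u t)).NeBot) :
    ∃ c : ℝ, 0 ≤ c ∧ HasDerivWithinAt (fun τ => F (u τ)) (c * d) (Ici 0) t := by
  have hq : u t ∈ s := hmap t ht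
  have hdiff := (hF.differentiableOn one_ne_zero) (u t) hq
  have hFd : HasDerivWithinAt F (derivWithin F s (u t)) s (u t) :=
    hdiff.hasDerivWithinAt
  refine ⟨derivWithin F s (u t), mono_deriv_nonneg hm hq hne hFd, ?_⟩
  exact HasDerivWithinAt.comp t hFd (hu.hasDerivWithinAt) hmap

/-- two-argument monotone rate composed with a trajectory -/
lemma comp2_deriv {F : ℝ → ℝ → ℝ} {s₁ s₂ : Set ℝ}
    (hsU : UniqueDiffOn ℝ (s₁ ×ˢ s₂))
    (hF : ContDiffOn ℝ 1 (Function.uncurry F) (s₁ ×ˢ s₂))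
    (hm1 : ∀ y ∈ s₂, MonotoneOn (fun a => F a y) s₁)
    (hm2 : ∀ a ∈ s₁, MonotoneOn (F a) s₂)
    {u₁ u₂ : ℝ → ℝ} {t d₁ d₂ : ℝ}
    (hu₁ : HasDerivAt u₁ d₁ t) (hu₂ : HasDerivAt u₂ d₂ t)
    (hmap : ∀ τ ∈ Ici (0:ℝ), (u₁ τ, u₂ τ) ∈ s₁ ×ˢ s₂) (ht : t ∈ Ici (0:ℝ))
    (hne₁ : (𝓝[s₁ \ {u₁ t}] (u₁ t)).NeBot)
    (hne₂ : (𝓝[s₂ \ {u₂ t}] (u₂ t)).NeBot) :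
    ∃ c₁ c₂ : ℝ, 0 ≤ c₁ ∧ 0 ≤ c₂ ∧
      HasDerivWithinAt (fun τ => F (u₁ τ) (u₂ τ)) (c₁ * d₁ + c₂ * d₂) (Ici 0) t := by
  have hq : (u₁ t, u₂ t) ∈ s₁ ×ˢ s₂ := hmap t ht
  set D := fderivWithin ℝ (Function.uncurry F) (s₁ ×ˢ s₂) (u₁ t, u₂ t) with hD
  have hdiff := (hF.differentiableOn one_ne_zero) _ hq
  have hFd : HasFDerivWithinAt (Function.uncurry F) D (s₁ ×ˢ s₂) (u₁ t, u₂ t) :=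
    hdiff.hasFDerivWithinAt
  have hγ : HasDerivAt (fun τ => (u₁ τ, u₂ τ)) (d₁, d₂) t := hu₁.prodMk hu₂
  have hcomp : HasDerivWithinAt (fun τ => F (u₁ τ) (u₂ τ)) (D (d₁, d₂)) (Ici 0) t :=
    (hFd.comp_hasDerivWithinAt (x := t) hγ.hasDerivWithinAt hmap :)
  have hdec : D (d₁, d₂) = D (1, 0) * d₁ + D (0, 1) * d₂ := by
    have : (d₁, d₂) = d₁ • ((1:ℝ), (0:ℝ)) + d₂ • ((0:ℝ), (1:ℝ)) := by
      simp [Prod.ext_iff]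
    rw [this, map_add, map_smul, map_smul]; simp [mul_comm]
  -- partial derivative 1
  have hline₁ : HasDerivWithinAt (fun a => F a (u₂ t)) (D (1, 0)) s₁ (u₁ t) := by
    have hφ : HasDerivAt (fun a : ℝ => (a, u₂ t)) ((1:ℝ), (0:ℝ)) (u₁ t) :=
      (hasDerivAt_id _).prodMk (hasDerivAt_const _ _)
    exact (hFd.comp_hasDerivWithinAt (x := u₁ t) hφ.hasDerivWithinAt
      (fun a ha => (⟨ha, hq.2⟩ : (a, u₂ t) ∈ s₁ ×ˢ s₂)) :)
  have hline₂ : HasDerivWithinAt (fun y => F (u₁ t) y) (D (0, 1)) s₂ (u₂ t) := by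
    have hφ : HasDerivAt (fun y : ℝ => (u₁ t, y)) ((0:ℝ), (1:ℝ)) (u₂ t) :=
      (hasDerivAt_const _ _).prodMk (hasDerivAt_id _)
    exact (hFd.comp_hasDerivWithinAt (x := u₂ t) hφ.hasDerivWithinAt
      (fun y hy => ⟨hq.1, hy⟩) :)
  refine ⟨D (1, 0), D (0, 1), mono_deriv_nonneg (hm1 _ hq.2) hq.1 hne₁ hline₁,
    mono_deriv_nonneg (hm2 _ hq.1) hq.2 hne₂ hline₂, ?_⟩
  rwa [hdec] at hcomp

lemma sgn_mul_le (bo : Bool) (w : ℝ) : (if bo then (1:ℝ) else -1) * w ≤ |w| := by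
  cases bo
  · simpa using neg_le_abs w
  · simpa using le_abs_self w

lemma kernel {K E : Type*} [Fintype K] [Fintype E] [DecidableEq K]
    (src dst : E → K) (g : E → ℝ → ℝ) (v : K → ℝ → ℝ)
    (hveq : ∀ k t, v k t = ∑ e : E,
      ((if dst e = k then (1:ℝ) else 0) - (if src e = k then 1 else 0)) * g e t)
    (hg : ∀ t, 0 ≤ t → ∀ e : E, ∃ ae be : ℝ, 0 ≤ ae ∧ 0 ≤ be ∧
      HasDerivWithinAt (g e) (ae * v (src e) t - be * v (dst e) t) (Ici 0) t)
    {t₁ t₂ : ℝ} (h1 : 0 ≤ t₁) (h12 : t₁ ≤ t₂) :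
    ∑ k : K, |v k t₂| ≤ ∑ k : K, |v k t₁| := by
  classical
  -- continuity of the g's and v's on [0,∞)
  have hgc : ∀ e, ContinuousOn (g e) (Ici 0) := by
    intro e t ht
    obtain ⟨ae, be, -, -, hd⟩ := hg t ht e
    exact hd.continuousWithinAt
  have hvc : ∀ k, ContinuousOn (v k) (Ici 0) := by
    intro k
    have h2 : ContinuousOn (fun t => ∑ e : E,
        ((if dst e = k then (1:ℝ) else 0) - (if src e = k then 1 else 0)) * g e t)
        (Ici 0) := by
      apply continuousOn_finset_sum
      intro e _
      exact continuousOn_const.mul (hgc e)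
    exact h2.congr (fun t _ => hveq k t)
  set W : ℝ → ℝ := fun t => ∑ k : K, |v k t| with hW
  have hWc : ContinuousOn W (Ici 0) := by
    apply continuousOn_finset_sum
    intro k _
    exact (hvc k).abs
  -- the sign-linear combinations
  set L : (K → Bool) → ℝ → ℝ :=
    fun σ z => ∑ k : K, (if σ k then (1:ℝ) else -1) * v k z with hL
  have hLrw : ∀ σ z, L σ z = ∑ e : E,
      ((if σ (dst e) then (1:ℝ) else -1) - (if σ (src e) then 1 else -1)) * g e z := by
    intro σ z
    simp only [hL, hveq, Finset.mul_sum]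
    rw [Finset.sum_comm]
    refine Finset.sum_congr rfl (fun e _ => ?_)
    have : ∀ k : K, (if σ k then (1:ℝ) else -1) *
        (((if dst e = k then (1:ℝ) else 0) - (if src e = k then 1 else 0)) * g e z)
        = (if dst e = k then (if σ k then (1:ℝ) else -1) * g e z else 0)
          - (if src e = k then (if σ k then (1:ℝ) else -1) * g e z else 0) := by
      intro k
      by_cases hd : dst e = k <;> by_cases hs : src e = k <;> simp [hd, hs] <;> ring
    rw [Finset.sum_congr rfl (fun k _ => this k), Finset.sum_sub_distrib,
      Finset.sum_ite_eq, Finset.sum_ite_eq]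
    simp [sub_mul]
  have hLc : ∀ σ, ContinuousOn (L σ) (Ici 0) := by
    intro σ
    apply continuousOn_finset_sum
    intro k _
    exact continuousOn_const.mul (hvc k)
  -- the Dini bound
  have bound : ∀ x ∈ Ico t₁ t₂, ∀ r, (0:ℝ) < r →
      ∃ᶠ z in 𝓝[>] x, slope W x z < r := by
    intro x hx r hr
    have hx0 : (0:ℝ) ≤ x := le_trans h1 hx.1
    obtain ⟨a, b, hab⟩ :
        ∃ a b : E → ℝ, ∀ e, 0 ≤ a e ∧ 0 ≤ b e ∧ HasDerivWithinAt (g e)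
          (a e * v (src e) x - b e * v (dst e) x) (Ici 0) x := by
      choose a b ha hb hd using hg x hx0
      exact ⟨a, b, fun e => ⟨ha e, hb e, hd e⟩⟩
    have ha : ∀ e, 0 ≤ a e := fun e => (hab e).1
    have hb : ∀ e, 0 ≤ b e := fun e => (hab e).2.1
    have hd := fun e => (hab e).2.2
    set d : E → ℝ := fun e => a e * v (src e) x - b e * v (dst e) x with hdd
    -- derivative of each L σ at x
    have hLd : ∀ σ : K → Bool, HasDerivWithinAt (L σ)
        (∑ e : E, ((if σ (dst e) then (1:ℝ) else -1) - (if σ (src e) then 1 else -1)) * d e)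
        (Ici 0) x := by
      intro σ
      have h2 : HasDerivWithinAt (fun z => ∑ e : E,
          ((if σ (dst e) then (1:ℝ) else -1) - (if σ (src e) then 1 else -1)) * g e z)
          (∑ e : E, ((if σ (dst e) then (1:ℝ) else -1) - (if σ (src e) then 1 else -1)) * d e)
          (Ici 0) x := by
        apply HasDerivWithinAt.fun_sum
        intro e _
        exact (hd e).const_mul _
      exact h2.congr (fun z _ => hLrw σ z) (hLrw σ x)
    -- derivative is nonpositive for a maximizing sign pattern
    have hDneg : ∀ σ : K → Bool, (∀ k, (if σ k then (1:ℝ) else -1) * v k x = |v k x|) →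
        (∑ e : E, ((if σ (dst e) then (1:ℝ) else -1) - (if σ (src e) then 1 else -1)) * d e) ≤ 0 := by
      intro σ hmax
      apply Finset.sum_nonpos
      intro e _
      have hkey : ((if σ (dst e) then (1:ℝ) else -1) - (if σ (src e) then 1 else -1)) * d e
          = a e * ((if σ (dst e) then (1:ℝ) else -1) * v (src e) x - |v (src e) x|)
            + b e * ((if σ (src e) then (1:ℝ) else -1) * v (dst e) x - |v (dst e) x|) := by
        rw [← hmax (src e), ← hmax (dst e)]
        simp only [hdd]
        ring
      rw [hkey]
      have h1' : (if σ (dst e) then (1:ℝ) else -1) * v (src e) x - |v (src e) x| ≤ 0 :=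
        sub_nonpos.2 (sgn_mul_le _ _)
      have h2' : (if σ (src e) then (1:ℝ) else -1) * v (dst e) x - |v (dst e) x| ≤ 0 :=
        sub_nonpos.2 (sgn_mul_le _ _)
      exact add_nonpos (mul_nonpos_of_nonneg_of_nonpos (ha e) h1')
        (mul_nonpos_of_nonneg_of_nonpos (hb e) h2')
    -- choose a sign pattern occurring frequently to the right of x
    set σfun : ℝ → K → Bool := fun z k => decide (0 ≤ v k z) with hσfun
    have hWL : ∀ z, W z = L (σfun z) z := by
      intro z
      refine Finset.sum_congr rfl (fun k _ => ?_)
      by_cases h0 : 0 ≤ v k z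
      · simp [hσfun, h0, abs_of_nonneg h0]
      · simp [hσfun, h0, abs_of_neg (lt_of_not_ge h0)]
    obtain ⟨σ, hfreq⟩ : ∃ σ : K → Bool, ∃ᶠ z in 𝓝[>] x, σfun z = σ := by
      by_contra hcon
      push_neg at hcon
      have hall : ∀ᶠ z in 𝓝[>] x, ∀ σ : K → Bool, σfun z ≠ σ := by
        rw [eventually_all]
        intro σ
        exact (hcon σ)
      obtain ⟨z, hz⟩ := hall.exists
      exact hz (σfun z) rfl
    -- the limit of W along the frequent set equals L σ x
    have hsub : 𝓝[>] x ≤ 𝓝[Ici (0:ℝ)] x :=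
      nhdsWithin_mono x (fun z hz => le_trans hx0 (le_of_lt hz))
    have hWLx : W x = L σ x := by
      set l' : Filter ℝ := 𝓝[>] x ⊓ 𝓟 {z | σfun z = σ} with hl'
      have hne : l'.NeBot := by
        rw [hl']; exact Filter.frequently_iff_neBot.1 hfreq
      have hl'le : l' ≤ 𝓝[Ici (0:ℝ)] x := le_trans inf_le_left hsub
      have hWt : Filter.Tendsto W l' (𝓝 (W x)) :=
        ((hWc x hx0).mono_left hl'le)
      have hLt : Filter.Tendsto (L σ) l' (𝓝 (L σ x)) :=
        ((hLc σ x hx0).mono_left hl'le)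
      have heq : W =ᶠ[l'] L σ := by
        have hmem : {z | σfun z = σ} ∈ l' := Filter.mem_inf_of_right (Filter.mem_principal_self _)
        filter_upwards [hmem] with z hz
        rw [hWL z, hz]
      exact tendsto_nhds_unique hWt (hLt.congr' heq.symm)
    -- maximality of σ at x, componentwise
    have hmax : ∀ k, (if σ k then (1:ℝ) else -1) * v k x = |v k x| := by
      have hzero : ∑ k : K, (|v k x| - (if σ k then (1:ℝ) else -1) * v k x) = 0 := by
        rw [Finset.sum_sub_distrib]
        have : ∑ k : K, (if σ k then (1:ℝ) else -1) * v k x = L σ x := rfl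
        rw [this, ← hWLx]
        simp [hW]
      intro k
      have hnn : ∀ k ∈ (Finset.univ : Finset K),
          0 ≤ |v k x| - (if σ k then (1:ℝ) else -1) * v k x :=
        fun k _ => sub_nonneg.2 (sgn_mul_le _ _)
      have := (Finset.sum_eq_zero_iff_of_nonneg hnn).1 hzero k (Finset.mem_univ k)
      linarith
    -- derivative of L σ is ≤ 0 < r, hence slopes are eventually < r
    have hDle := hDneg σ hmax
    have htend : Filter.Tendsto (slope (L σ) x) (𝓝[>] x) (𝓝
        (∑ e : E, ((if σ (dst e) then (1:ℝ) else -1) - (if σ (src e) then 1 else -1)) * d e)) := by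
      have := hasDerivWithinAt_iff_tendsto_slope.1 (hLd σ)
      apply this.mono_left
      apply nhdsWithin_mono
      intro z hz
      exact ⟨le_trans hx0 (le_of_lt hz), ne_of_gt hz⟩
    have heslope : ∀ᶠ z in 𝓝[>] x, slope (L σ) x z < r := by
      exact htend.eventually (Filter.Tendsto.eventually_lt_const (lt_of_le_of_lt hDle hr)
        Filter.tendsto_id)
    refine (hfreq.and_eventually heslope).mono ?_
    intro z hz
    have : slope W x z = slope (L σ) x z := by
      rw [slope_def_field, slope_def_field, hWL z, hz.1, hWLx]
    rw [this]
    exact hz.2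
  -- apply the fencing theorem
  have := image_le_of_liminf_slope_right_le_deriv_boundary
    (f := W) (a := t₁) (b := t₂) (B := fun _ => W t₁) (B' := fun _ => 0)
    (hWc.mono (fun z hz => le_trans h1 hz.1)) le_rfl continuousOn_const
    (fun x _ => hasDerivWithinAt_const x _ _) bound
  exact this (right_mem_Icc.2 h12)

section Graph
variable (S : GORFM)

abbrev GK := (Fin S.M × Fin S.s × Fin S.n) ⊕ (Fin S.M ⊕ Unit)
abbrev GE := (Fin S.M × Fin S.s × Fin (S.n+1)) ⊕ (Fin S.M ⊕ Fin S.M)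

def gsrc : GE S → GK S
  | .inl (p, i, k) =>
      if _ : k.val = 0 then .inr (.inl p)
      else .inl (p, i, ⟨k.val - 1, by have := k.isLt; omega⟩)
  | .inr (.inl _) => .inr (.inr ())
  | .inr (.inr p) => .inr (.inl p)

def gdst : GE S → GK S
  | .inl (p, i, k) =>
      if _ : k.val = S.n then .inr (.inl p)
      else .inl (p, i, ⟨k.val, by have := k.isLt; omega⟩)
  | .inr (.inl p) => .inr (.inl p)
  | .inr (.inr _) => .inr (.inr ())

variable (traj : ℝ → GState)

noncomputable def gv : GK S → ℝ → ℝ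
  | .inl (p, i, j) => fun t => S.fx (traj t) p i (j.val + 1)
  | .inr (.inl p) => fun t => S.fz (traj t) p
  | .inr (.inr _) => fun t => S.fzE (traj t)

noncomputable def gg : GE S → ℝ → ℝ
  | .inl (p, i, k) => fun t => S.flow (traj t) p i k.val
  | .inr (.inl p) => fun t => S.Rp p ((traj t).zE)
  | .inr (.inr p) => fun t => S.Rm p ((traj t).z p)

lemma ind_mul (P Q : Prop) [Decidable P] [Decidable Q] (G : ℝ) :
    ((if P then (1:ℝ) else 0) - (if Q then 1 else 0)) * G
      = (if P then G else 0) - (if Q then G else 0) := by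
  split_ifs <;> ring

lemma gveq (k : GK S) (t : ℝ) : gv S traj k t = ∑ e : GE S,
    ((if gdst S e = k then (1:ℝ) else 0) - (if gsrc S e = k then 1 else 0))
      * gg S traj e t := by
  classical
  rw [Finset.sum_congr rfl (fun e _ => ind_mul _ _ _), Finset.sum_sub_distrib]
  rcases k with ⟨p, i, j⟩ | p | u
  · -- codon component
    have hd : ∑ e : GE S, (if gdst S e = Sum.inl (p, i, j) then gg S traj e t else 0)
        = S.flow (traj t) p i j.val := by
      rw [Finset.sum_eq_single (Sum.inl (p, i, ⟨j.val, by have := j.isLt; omega⟩))]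
      · simp [gdst, gg, Fin.ext_iff, j.isLt.ne]
      · rintro (⟨p', i', k'⟩ | p' | p') - hne
        · simp only [gdst]
          split_ifs with h1 h2 h2
          · exact absurd h2 (by simp)
          · rfl
          · exfalso; apply hne
            simp only [Sum.inl.injEq, Prod.mk.injEq, Fin.ext_iff] at h2 ⊢
            obtain ⟨hp, hi, hk⟩ := h2
            exact ⟨hp, hi, by omega⟩
          · rfl
        · simp [gdst]
        · simp [gdst]
      · intro h; exact absurd (Finset.mem_univ _) h
    have hs : ∑ e : GE S, (if gsrc S e = Sum.inl (p, i, j) then gg S traj e t else 0)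
        = S.flow (traj t) p i (j.val + 1) := by
      rw [Finset.sum_eq_single (Sum.inl (p, i, ⟨j.val + 1, by have := j.isLt; omega⟩))]
      · simp [gsrc, gg, Fin.ext_iff]
      · rintro (⟨p', i', k'⟩ | p' | p') - hne
        · simp only [gsrc]
          split_ifs with h1 h2 h2
          · exact absurd h2 (by simp)
          · rfl
          · exfalso; apply hne
            simp only [Sum.inl.injEq, Prod.mk.injEq, Fin.ext_iff] at h2 ⊢
            obtain ⟨hp, hi, hk⟩ := h2
            exact ⟨hp, hi, by omega⟩
          · rfl
        · simp [gsrc]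
        · simp [gsrc]
      · intro h; exact absurd (Finset.mem_univ _) h
    rw [hd, hs]
    show S.fx (traj t) p i (j.val + 1) = _
    rw [GORFM.fx, Nat.add_sub_cancel]
  · -- z-pool component
    have hd : ∑ e : GE S, (if gdst S e = Sum.inr (Sum.inl p) then gg S traj e t else 0)
        = (∑ i' : Fin S.s, S.flow (traj t) p i' S.n) + S.Rp p ((traj t).zE) := by
      rw [Fintype.sum_sum_type, Fintype.sum_sum_type]
      have h3 : ∑ p' : Fin S.M, (if gdst S (Sum.inr (Sum.inr p')) = Sum.inr (Sum.inl p)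
          then gg S traj (Sum.inr (Sum.inr p')) t else 0) = 0 := by
        apply Finset.sum_eq_zero; intro p' _; simp [gdst]
      have h2 : ∑ p' : Fin S.M, (if gdst S (Sum.inr (Sum.inl p')) = Sum.inr (Sum.inl p)
          then gg S traj (Sum.inr (Sum.inl p')) t else 0) = S.Rp p ((traj t).zE) := by
        have : ∀ p' : Fin S.M, (if gdst S (Sum.inr (Sum.inl p')) = Sum.inr (Sum.inl p)
            then gg S traj (Sum.inr (Sum.inl p')) t else 0)
            = if p' = p then S.Rp p' ((traj t).zE) else 0 := by
          intro p'; simp [gdst, gg]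
        rw [Finset.sum_congr rfl (fun p' _ => this p'), Finset.sum_ite_eq']
        simp
      have h1 : ∑ e1 : Fin S.M × Fin S.s × Fin (S.n+1),
          (if gdst S (Sum.inl e1) = Sum.inr (Sum.inl p) then gg S traj (Sum.inl e1) t else 0)
          = ∑ i' : Fin S.s, S.flow (traj t) p i' S.n := by
        rw [Fintype.sum_prod_type]
        have hinner : ∀ (p' : Fin S.M),
            (∑ q : Fin S.s × Fin (S.n+1), (if gdst S (Sum.inl (p', q)) = Sum.inr (Sum.inl p)
              then gg S traj (Sum.inl (p', q)) t else 0))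
            = if p' = p then ∑ i' : Fin S.s, S.flow (traj t) p' i' S.n else 0 := by
          intro p'
          rw [Fintype.sum_prod_type]
          have hk : ∀ i' : Fin S.s, (∑ k' : Fin (S.n+1),
              (if gdst S (Sum.inl (p', i', k')) = Sum.inr (Sum.inl p)
                then gg S traj (Sum.inl (p', i', k')) t else 0))
              = if p' = p then S.flow (traj t) p' i' S.n else 0 := by
            intro i'
            rw [Finset.sum_eq_single (Fin.last S.n)]
            · simp [gdst, gg]
            · rintro k' - hne
              have hkn : k'.val ≠ S.n := fun h => hne (Fin.ext (by simpa using h))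
              simp [gdst, hkn]
            · intro h; exact absurd (Finset.mem_univ _) h
          rw [Finset.sum_congr rfl (fun i' _ => hk i')]
          split_ifs with h <;> simp
        rw [Finset.sum_congr rfl (fun p' _ => hinner p'), Finset.sum_ite_eq']
        simp
      rw [h1, h2, h3]; ring
    have hs : ∑ e : GE S, (if gsrc S e = Sum.inr (Sum.inl p) then gg S traj e t else 0)
        = (∑ i' : Fin S.s, S.flow (traj t) p i' 0) + S.Rm p ((traj t).z p) := by
      rw [Fintype.sum_sum_type, Fintype.sum_sum_type]
      have h2 : ∑ p' : Fin S.M, (if gsrc S (Sum.inr (Sum.inl p')) = Sum.inr (Sum.inl p)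
          then gg S traj (Sum.inr (Sum.inl p')) t else 0) = 0 := by
        apply Finset.sum_eq_zero; intro p' _; simp [gsrc]
      have h3 : ∑ p' : Fin S.M, (if gsrc S (Sum.inr (Sum.inr p')) = Sum.inr (Sum.inl p)
          then gg S traj (Sum.inr (Sum.inr p')) t else 0) = S.Rm p ((traj t).z p) := by
        have : ∀ p' : Fin S.M, (if gsrc S (Sum.inr (Sum.inr p')) = Sum.inr (Sum.inl p)
            then gg S traj (Sum.inr (Sum.inr p')) t else 0)
            = if p' = p then S.Rm p' ((traj t).z p') else 0 := by
          intro p'; simp [gsrc, gg]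
        rw [Finset.sum_congr rfl (fun p' _ => this p'), Finset.sum_ite_eq']
        simp
      have h1 : ∑ e1 : Fin S.M × Fin S.s × Fin (S.n+1),
          (if gsrc S (Sum.inl e1) = Sum.inr (Sum.inl p) then gg S traj (Sum.inl e1) t else 0)
          = ∑ i' : Fin S.s, S.flow (traj t) p i' 0 := by
        rw [Fintype.sum_prod_type]
        have hinner : ∀ (p' : Fin S.M),
            (∑ q : Fin S.s × Fin (S.n+1), (if gsrc S (Sum.inl (p', q)) = Sum.inr (Sum.inl p)
              then gg S traj (Sum.inl (p', q)) t else 0))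
            = if p' = p then ∑ i' : Fin S.s, S.flow (traj t) p' i' 0 else 0 := by
          intro p'
          rw [Fintype.sum_prod_type]
          have hk : ∀ i' : Fin S.s, (∑ k' : Fin (S.n+1),
              (if gsrc S (Sum.inl (p', i', k')) = Sum.inr (Sum.inl p)
                then gg S traj (Sum.inl (p', i', k')) t else 0))
              = if p' = p then S.flow (traj t) p' i' 0 else 0 := by
            intro i'
            rw [Finset.sum_eq_single (0 : Fin (S.n+1))]
            · simp [gsrc, gg]
            · rintro k' - hne
              have hkn : k'.val ≠ 0 := fun h => hne (Fin.ext (by simpa using h))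
              simp [gsrc, hkn]
            · intro h; exact absurd (Finset.mem_univ _) h
          rw [Finset.sum_congr rfl (fun i' _ => hk i')]
          split_ifs with h <;> simp
        rw [Finset.sum_congr rfl (fun p' _ => hinner p'), Finset.sum_ite_eq']
        simp
      rw [h1, h2, h3]; ring
    rw [hd, hs]
    show S.fz (traj t) p = _
    rw [GORFM.fz]
    rw [← Fin.sum_univ_eq_sum_range (fun i' => S.flow (traj t) p i' S.n - S.flow (traj t) p i' 0) S.s]
    rw [Finset.sum_sub_distrib]
    ring
  · -- zE component
    have hd : ∑ e : GE S, (if gdst S e = Sum.inr (Sum.inr u) then gg S traj e t else 0)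
        = ∑ p' : Fin S.M, S.Rm p' ((traj t).z p') := by
      rw [Fintype.sum_sum_type, Fintype.sum_sum_type]
      have h1 : ∑ e1 : Fin S.M × Fin S.s × Fin (S.n+1),
          (if gdst S (Sum.inl e1) = Sum.inr (Sum.inr u) then gg S traj (Sum.inl e1) t else 0)
          = 0 := by
        apply Finset.sum_eq_zero; rintro ⟨p', i', k'⟩ -
        simp only [gdst]
        split_ifs with h1 h2 h2 <;> first | rfl | (exact absurd h2 (by simp))
      have h2 : ∑ p' : Fin S.M, (if gdst S (Sum.inr (Sum.inl p')) = Sum.inr (Sum.inr u)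
          then gg S traj (Sum.inr (Sum.inl p')) t else 0) = 0 := by
        apply Finset.sum_eq_zero; intro p' _; simp [gdst]
      have h3 : ∑ p' : Fin S.M, (if gdst S (Sum.inr (Sum.inr p')) = Sum.inr (Sum.inr u)
          then gg S traj (Sum.inr (Sum.inr p')) t else 0)
          = ∑ p' : Fin S.M, S.Rm p' ((traj t).z p') := by
        apply Finset.sum_congr rfl; intro p' _; simp [gdst, gg]
      rw [h1, h2, h3]; ring
    have hs : ∑ e : GE S, (if gsrc S e = Sum.inr (Sum.inr u) then gg S traj e t else 0)
        = ∑ p' : Fin S.M, S.Rp p' ((traj t).zE) := by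
      rw [Fintype.sum_sum_type, Fintype.sum_sum_type]
      have h1 : ∑ e1 : Fin S.M × Fin S.s × Fin (S.n+1),
          (if gsrc S (Sum.inl e1) = Sum.inr (Sum.inr u) then gg S traj (Sum.inl e1) t else 0)
          = 0 := by
        apply Finset.sum_eq_zero; rintro ⟨p', i', k'⟩ -
        simp only [gsrc]
        split_ifs with h1 h2 h2 <;> first | rfl | (exact absurd h2 (by simp))
      have h3 : ∑ p' : Fin S.M, (if gsrc S (Sum.inr (Sum.inr p')) = Sum.inr (Sum.inr u)
          then gg S traj (Sum.inr (Sum.inr p')) t else 0) = 0 := by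
        apply Finset.sum_eq_zero; intro p' _; simp [gsrc]
      have h2 : ∑ p' : Fin S.M, (if gsrc S (Sum.inr (Sum.inl p')) = Sum.inr (Sum.inr u)
          then gg S traj (Sum.inr (Sum.inl p')) t else 0)
          = ∑ p' : Fin S.M, S.Rp p' ((traj t).zE) := by
        apply Finset.sum_congr rfl; intro p' _; simp [gsrc, gg]
      rw [h1, h2, h3]; ring
    rw [hd, hs]
    show S.fzE (traj t) = _
    rw [GORFM.fzE,
      ← Fin.sum_univ_eq_sum_range (fun p' => S.Rm p' ((traj t).z p')) S.M,
      ← Fin.sum_univ_eq_sum_range (fun p' => S.Rp p' ((traj t).zE)) S.M]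

lemma gedge (hsol : S.isSolution traj) (hΩ : ∀ t, 0 ≤ t → S.inOmega (traj t))
    (t : ℝ) (ht : (0:ℝ) ≤ t) (e : GE S) :
    ∃ ae be : ℝ, 0 ≤ ae ∧ 0 ≤ be ∧ HasDerivWithinAt (gg S traj e)
      (ae * gv S traj (gsrc S e) t - be * gv S traj (gdst S e) t) (Ici 0) t := by
  rcases e with ⟨p, i, k⟩ | p | p
  · have hkl := k.isLt
    have hn := S.hn
    by_cases hk0 : (k : ℕ) = 0
    · -- initiation edge
      have hkn : ¬ (k : ℕ) = S.n := by omega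
      have hgge : gg S traj (Sum.inl (p, i, k))
          = fun τ => S.R0 p i (1 - (traj τ).x p i 1) ((traj τ).z p) := by
        funext τ; simp [gg, GORFM.flow, hk0]
      have hu1 : HasDerivAt (fun τ => 1 - (traj τ).x p i 1)
          (-(S.fx (traj t) p i 1)) t :=
        (hsol.1 t ht p p.isLt i i.isLt 1 le_rfl S.hn).const_sub 1
      have hu2 := hsol.2.1 t ht p p.isLt
      have hmap : ∀ τ ∈ Ici (0:ℝ),
          ((1 - (traj τ).x p i 1), (traj τ).z p) ∈ (Icc (0:ℝ) 1) ×ˢ (Ici (0:ℝ)) := by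
        intro τ hτ
        have hx := (hΩ τ hτ).1 p p.isLt i i.isLt 1 le_rfl S.hn
        simp only [Set.prodMk_mem_set_prod_eq, Set.mem_Icc, Set.mem_Ici]
        exact ⟨⟨by linarith [hx.2], by linarith [hx.1]⟩, (hΩ τ hτ).2.2 p p.isLt⟩
      obtain ⟨c₁, c₂, hc₁, hc₂, hd⟩ := comp2_deriv
        ((uniqueDiffOn_Icc one_pos).prod (uniqueDiffOn_Ici 0))
        (S.hR0_smooth p p.isLt i i.isLt) (S.hR0_mono1 p p.isLt i i.isLt)
        (S.hR0_mono2 p p.isLt i i.isLt) hu1 hu2 hmap ht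
        (neBot_punct_Icc (hmap t ht).1) (neBot_punct_Ici (hmap t ht).2)
      refine ⟨c₂, c₁, hc₂, hc₁, ?_⟩
      rw [hgge]
      convert hd using 1
      have hsrc : gsrc S (Sum.inl (p,i,k)) = Sum.inr (Sum.inl p) := by simp [gsrc, hk0]
      have hdst : gdst S (Sum.inl (p,i,k)) = Sum.inl (p, i, ⟨(k:ℕ), by omega⟩) := by
        simp [gdst, hkn]
      rw [hsrc, hdst]
      simp [gv, hk0]
      ring
    · by_cases hkn : (k : ℕ) = S.n
      · -- termination edge
        have hn0 : ¬ S.n = 0 := by omega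
        have hgge : gg S traj (Sum.inl (p, i, k))
            = fun τ => S.Rn p i ((traj τ).x p i S.n) := by
          funext τ; simp [gg, GORFM.flow, hk0, hkn, hn0]
        obtain ⟨c, hc, hd⟩ := comp1_deriv (uniqueDiffOn_Icc one_pos)
          (S.hRn_smooth p p.isLt i i.isLt) (S.hRn_mono p p.isLt i i.isLt)
          (hsol.1 t ht p p.isLt i i.isLt S.n S.hn le_rfl)
          (fun τ hτ => (hΩ τ hτ).1 p p.isLt i i.isLt S.n S.hn le_rfl) ht
          (neBot_punct_Icc ((hΩ t ht).1 p p.isLt i i.isLt S.n S.hn le_rfl))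
        refine ⟨c, 0, hc, le_rfl, ?_⟩
        rw [hgge]
        convert hd using 1
        have hsrc : gsrc S (Sum.inl (p,i,k)) = Sum.inl (p, i, ⟨(k:ℕ) - 1, by omega⟩) := by
          simp [gsrc, hk0]
        have hdst : gdst S (Sum.inl (p,i,k)) = Sum.inr (Sum.inl p) := by simp [gdst, hkn]
        rw [hsrc, hdst]
        have h' : (k:ℕ) - 1 + 1 = S.n := by omega
        simp [gv, h']
      · -- elongation edge
        have h1 : 1 ≤ (k:ℕ) := by omega
        have h2 : (k:ℕ) ≤ S.n - 1 := by omega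
        have hgge : gg S traj (Sum.inl (p, i, k))
            = fun τ => S.Rel p i k (1 - (traj τ).x p i ((k:ℕ)+1)) ((traj τ).x p i k) := by
          funext τ; simp [gg, GORFM.flow, hk0, hkn]
        have hu1 : HasDerivAt (fun τ => 1 - (traj τ).x p i ((k:ℕ)+1))
            (-(S.fx (traj t) p i ((k:ℕ)+1))) t :=
          (hsol.1 t ht p p.isLt i i.isLt ((k:ℕ)+1) (by omega) (by omega)).const_sub 1
        have hu2 := hsol.1 t ht p p.isLt i i.isLt k h1 (by omega)
        have hmap : ∀ τ ∈ Ici (0:ℝ),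
            ((1 - (traj τ).x p i ((k:ℕ)+1)), (traj τ).x p i k)
              ∈ (Icc (0:ℝ) 1) ×ˢ (Icc (0:ℝ) 1) := by
          intro τ hτ
          have hxk1 := (hΩ τ hτ).1 p p.isLt i i.isLt ((k:ℕ)+1) (by omega) (by omega)
          have hxk := (hΩ τ hτ).1 p p.isLt i i.isLt k h1 (by omega)
          simp only [Set.prodMk_mem_set_prod_eq, Set.mem_Icc, Set.mem_Ici]
          exact ⟨⟨by linarith [hxk1.2], by linarith [hxk1.1]⟩, ⟨hxk.1, hxk.2⟩⟩
        obtain ⟨c₁, c₂, hc₁, hc₂, hd⟩ := comp2_deriv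
          ((uniqueDiffOn_Icc one_pos).prod (uniqueDiffOn_Icc one_pos))
          (S.hRel_smooth p p.isLt i i.isLt k h1 h2) (S.hRel_mono1 p p.isLt i i.isLt k h1 h2)
          (S.hRel_mono2 p p.isLt i i.isLt k h1 h2) hu1 hu2 hmap ht
          (neBot_punct_Icc (hmap t ht).1) (neBot_punct_Icc (hmap t ht).2)
        refine ⟨c₂, c₁, hc₂, hc₁, ?_⟩
        rw [hgge]
        convert hd using 1
        have hsrc : gsrc S (Sum.inl (p,i,k)) = Sum.inl (p, i, ⟨(k:ℕ) - 1, by omega⟩) := by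
          simp [gsrc, hk0]
        have hdst : gdst S (Sum.inl (p,i,k)) = Sum.inl (p, i, ⟨(k:ℕ), by omega⟩) := by
          simp [gdst, hkn]
        rw [hsrc, hdst]
        have h' : (k:ℕ) - 1 + 1 = (k:ℕ) := by omega
        simp [gv, h']
        ring
  · -- pool binding edge
    obtain ⟨c, hc, hd⟩ := comp1_deriv (uniqueDiffOn_Ici 0) (S.hRp_smooth p p.isLt)
      (S.hRp_mono p p.isLt) (hsol.2.2 t ht) (fun τ hτ => (hΩ τ hτ).2.1) ht
      (neBot_punct_Ici ((hΩ t ht).2.1))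
    exact ⟨c, 0, hc, le_rfl, by simpa [gsrc, gdst, gv, gg] using hd⟩
  · -- pool unbinding edge
    obtain ⟨c, hc, hd⟩ := comp1_deriv (uniqueDiffOn_Ici 0) (S.hRm_smooth p p.isLt)
      (S.hRm_mono p p.isLt) (hsol.2.1 t ht p p.isLt)
      (fun τ hτ => (hΩ τ hτ).2.2 p p.isLt) ht
      (neBot_punct_Ici ((hΩ t ht).2.2 p p.isLt))
    exact ⟨c, 0, hc, le_rfl, by simpa [gsrc, gdst, gv, gg] using hd⟩

end Graph

/-- For the generalized monotone-rate ORFM, along any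
solution whose trajectory remains in the state space, the function
`t ↦ V(x(t),z(t))` is non-increasing. -/
theorem gorfm_V_is_lyapunov (S : GORFM) (traj : ℝ → GState)
    (hsol : S.isSolution traj)
    (hΩ : ∀ t, 0 ≤ t → S.inOmega (traj t)) :
    ∀ t₁ t₂, 0 ≤ t₁ → t₁ ≤ t₂ → S.V (traj t₂) ≤ S.V (traj t₁) := by
  intro t₁ t₂ h1 h12
  have hV : ∀ t : ℝ, (∑ k : GK S, |gv S traj k t|) = S.V (traj t) := by
    intro t
    rw [Fintype.sum_sum_type, Fintype.sum_sum_type, Fintype.sum_prod_type]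
    have hx : ∀ p : Fin S.M, (∑ q : Fin S.s × Fin S.n, |gv S traj (Sum.inl (p, q)) t|)
        = ∑ i ∈ Finset.range S.s, ∑ j ∈ Finset.Icc 1 S.n, |S.fx (traj t) p i j| := by
      intro p
      rw [Fintype.sum_prod_type,
        ← Fin.sum_univ_eq_sum_range
          (fun i => ∑ j ∈ Finset.Icc 1 S.n, |S.fx (traj t) p i j|) S.s]
      apply Finset.sum_congr rfl
      intro i _
      rw [← Finset.Ico_add_one_right_eq_Icc, Finset.sum_Ico_eq_sum_range]
      have hnn : S.n + 1 - 1 = S.n := by omega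
      rw [hnn, ← Fin.sum_univ_eq_sum_range (fun j => |S.fx (traj t) p i (1 + j)|) S.n]
      apply Finset.sum_congr rfl
      intro j _
      simp [gv, Nat.add_comm]
    rw [Finset.sum_congr rfl (fun p _ => hx p),
      Fin.sum_univ_eq_sum_range
        (fun p => ∑ i ∈ Finset.range S.s, ∑ j ∈ Finset.Icc 1 S.n, |S.fx (traj t) p i j|) S.M]
    have hz : (∑ p : Fin S.M, |gv S traj (Sum.inr (Sum.inl p)) t|)
        = ∑ p ∈ Finset.range S.M, |S.fz (traj t) p| := by
      rw [← Fin.sum_univ_eq_sum_range (fun p => |S.fz (traj t) p|) S.M]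
      rfl
    have hE : (∑ u : Unit, |gv S traj (Sum.inr (Sum.inr u)) t|) = |S.fzE (traj t)| := by
      simp [gv]
    rw [hz, hE, GORFM.V]
    ring
  rw [← hV t₁, ← hV t₂]
  exact kernel (gsrc S) (gdst S) (gg S traj) (gv S traj) (gveq S traj)
    (fun t ht e => gedge S traj hsol hΩ t ht e) h1 h12
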